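/- arXiv:2602.07633 — 12 statements merged into one kernel-verified Lean document; each statement's English description precedes it below -/
import Mathlib

section
/- Let y : [0,∞) → E be a nonconformity flow trajectory. Then S(y(t)) → τ as t → ∞. -/
open scoped RealInnerProductSpace

/-- The nonconformity velocity field
`v(y) = -λ (S y - τ) ∇S(y) / ‖∇S(y)‖²`. -/
noncomputable def ncVel {n : ℕ} (S : EuclideanSpace ℝ (Fin n) → ℝ) (τ lam : ℝ)
    (y : EuclideanSpace ℝ (Fin n)) : EuclideanSpace ℝ (Fin n) :=
  (-lam * (S y - τ) / ‖gradient S y‖ ^ 2) • gradient S y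
/-- along a nonconformity flow trajectory, `S(y(t)) → τ` as `t → ∞`. -/
theorem score_converges_to_threshold {n : ℕ} (S : EuclideanSpace ℝ (Fin n) → ℝ)
    (hS : Differentiable ℝ S) (τ lam : ℝ) (hlam : 0 < lam)
    (y : ℝ → EuclideanSpace ℝ (Fin n))
    (hy : ∀ t : ℝ, 0 ≤ t → HasDerivAt y (ncVel S τ lam (y t)) t)
    (hgrad : ∀ t : ℝ, 0 ≤ t → gradient S (y t) ≠ 0) :
    Filter.Tendsto (fun t => S (y t)) Filter.atTop (nhds τ) := by
  set f : ℝ → ℝ := fun t => S (y t) - τ with hfdef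
  have hf : ∀ t : ℝ, 0 ≤ t → HasDerivAt f (-lam * f t) t := by
    intro t ht
    have hg : HasFDerivAt S (InnerProductSpace.toDual ℝ _ (gradient S (y t))) (y t) :=
      ((hS (y t)).hasGradientAt).hasFDerivAt
    have hcomp := hg.comp_hasDerivAt t (hy t ht)
    have hval : InnerProductSpace.toDual ℝ _ (gradient S (y t)) (ncVel S τ lam (y t))
        = -lam * f t := by
      rw [InnerProductSpace.toDual_apply_apply, ncVel, real_inner_smul_right,
        real_inner_self_eq_norm_sq]
      have hne : ‖gradient S (y t)‖ ^ 2 ≠ 0 :=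
        pow_ne_zero 2 (norm_ne_zero_iff.mpr (hgrad t ht))
      rw [div_mul_cancel₀ _ hne]
    have : HasDerivAt (fun t => S (y t)) (-lam * f t) t := hval ▸ hcomp
    simpa [hfdef] using this.sub_const τ
  -- g t = exp(lam * t) * f t is constant on [0, ∞)
  have hconst : ∀ t : ℝ, 0 ≤ t → Real.exp (lam * t) * f t = f 0 := by
    intro t ht
    have h := constant_of_has_deriv_right_zero (f := fun s => Real.exp (lam * s) * f s)
      (a := 0) (b := t)
      (by
        apply ContinuousOn.mul
        · exact (Real.continuous_exp.comp (continuous_const.mul continuous_id)).continuousOn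
        · intro s hs
          exact ((hf s hs.1).continuousAt.continuousWithinAt))
      (by
        intro s hs
        have hd : HasDerivAt (fun s => Real.exp (lam * s) * f s)
            (lam * Real.exp (lam * s) * f s + Real.exp (lam * s) * (-lam * f s)) s := by
          have he : HasDerivAt (fun s => Real.exp (lam * s)) (lam * Real.exp (lam * s)) s := by
            convert ((hasDerivAt_id s).const_mul lam).exp using 1
            show lam * Real.exp (lam * s) = Real.exp (lam * s) * (lam * 1)
            ring
            rfl
          exact he.mul (hf s hs.1)
        have : lam * Real.exp (lam * s) * f s + Real.exp (lam * s) * (-lam * f s) = 0 := by ring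
        rw [this] at hd
        exact hd.hasDerivWithinAt)
    simpa using h t ⟨ht, le_refl t⟩
  have hform : ∀ t : ℝ, 0 ≤ t → S (y t) = τ + f 0 * Real.exp (-(lam * t)) := by
    intro t ht
    have := hconst t ht
    have hx : f t = f 0 * Real.exp (-(lam * t)) := by
      rw [← this, Real.exp_neg]
      field_simp
    have hx' : S (y t) - τ = f 0 * Real.exp (-(lam * t)) := hx
    linarith
  have hlim : Filter.Tendsto (fun t : ℝ => τ + f 0 * Real.exp (-(lam * t)))
      Filter.atTop (nhds τ) := by
    have : Filter.Tendsto (fun t : ℝ => Real.exp (-(lam * t))) Filter.atTop (nhds 0) :=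
      Real.tendsto_exp_neg_atTop_nhds_zero.comp
        (Filter.Tendsto.const_mul_atTop hlam Filter.tendsto_id)
    have h2 : Filter.Tendsto (fun t : ℝ => f 0 * Real.exp (-(lam * t))) Filter.atTop (nhds 0) := by
      simpa using this.const_mul (f 0)
    simpa using (tendsto_const_nhds.add h2)
  apply hlim.congr'
  filter_upwards [Filter.eventually_ge_atTop 0] with t ht
  exact (hform t ht).symm
end

section
/- Let y : [0,∞) → E be a nonconformity flow trajectory. Every ω-limit point of the trajectory lies in the level set ∂C := {z ∈ E : S(z) = τ}; that is, if (t_k) is a sequence with t_k → ∞ and y(t_k) → ȳ, then S(ȳ) = τ. -/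
open scoped RealInnerProductSpace

/-- every ω-limit point of a nonconformity flow trajectory lies in
the level set `{z : S z = τ}`: if `t_k → ∞` and `y(t_k) → ȳ`, then `S ȳ = τ`. -/
theorem omega_limit_in_boundary {n : ℕ} (S : EuclideanSpace ℝ (Fin n) → ℝ)
    (hS : Differentiable ℝ S) (τ lam : ℝ) (hlam : 0 < lam)
    (y : ℝ → EuclideanSpace ℝ (Fin n))
    (hy : ∀ t : ℝ, 0 ≤ t → HasDerivAt y (ncVel S τ lam (y t)) t)
    (hgrad : ∀ t : ℝ, 0 ≤ t → gradient S (y t) ≠ 0)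
    (tk : ℕ → ℝ) (htk0 : ∀ k, 0 ≤ tk k)
    (htk : Filter.Tendsto tk Filter.atTop Filter.atTop)
    (ybar : EuclideanSpace ℝ (Fin n))
    (hlim : Filter.Tendsto (fun k => y (tk k)) Filter.atTop (nhds ybar)) :
    S ybar = τ := by
  -- derivative of g(t) = S (y t) - τ
  have hgderiv : ∀ t : ℝ, 0 ≤ t →
      HasDerivAt (fun s => S (y s) - τ) (-lam * (S (y t) - τ)) t := by
    intro t ht
    have hgr := ((hS (y t)).hasGradientAt).hasFDerivAt
    have hc := hgr.comp_hasDerivAt t (hy t ht)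
    have hval : (InnerProductSpace.toDual ℝ _ (gradient S (y t)))
        (ncVel S τ lam (y t)) = -lam * (S (y t) - τ) := by
      rw [InnerProductSpace.toDual_apply_apply]
      unfold ncVel
      rw [real_inner_smul_right, real_inner_self_eq_norm_sq]
      have hne : ‖gradient S (y t)‖ ^ 2 ≠ 0 :=
        pow_ne_zero _ (norm_ne_zero_iff.mpr (hgrad t ht))
      have hne' : ‖gradient S (y t)‖ ≠ 0 := norm_ne_zero_iff.mpr (hgrad t ht)
      field_simp
    have := hc
    rw [hval] at this
    simpa using this.sub_const τ
  -- h(t) = exp(lam t) * (S (y t) - τ) has zero derivative hence is constant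
  set h : ℝ → ℝ := fun t => Real.exp (lam * t) * (S (y t) - τ) with hh
  have hconst : ∀ t : ℝ, 0 ≤ t → h t = h 0 := by
    intro T hT
    have key : ∀ x ∈ Set.Icc (0:ℝ) T, h x = h 0 := by
      apply constant_of_has_deriv_right_zero
      · intro x hx
        have := ((Real.hasDerivAt_exp (lam*x)).comp x
          ((hasDerivAt_id x).const_mul lam)).mul (hgderiv x hx.1)
        exact this.continuousAt.continuousWithinAt
      · intro x hx
        have hd := ((Real.hasDerivAt_exp (lam*x)).comp x
          ((hasDerivAt_id x).const_mul lam)).mul (hgderiv x hx.1)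
        have hd0 : HasDerivAt h 0 x := by
          refine hd.congr_deriv ?_
          simp only [Function.comp_apply]
          ring
        exact hd0.hasDerivWithinAt
    exact key T ⟨hT, le_rfl⟩
  -- limit along tk
  have h1 : Filter.Tendsto (fun k => S (y (tk k)) - τ) Filter.atTop (nhds 0) := by
    have heq : ∀ k, S (y (tk k)) - τ = Real.exp (-(lam * tk k)) * (S (y 0) - τ) := by
      intro k
      have hc0 := hconst (tk k) (htk0 k)
      simp only [hh, mul_zero, Real.exp_zero, one_mul] at hc0
      have hexp : Real.exp (lam * tk k) ≠ 0 := Real.exp_ne_zero _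
      rw [Real.exp_neg]
      field_simp
      linear_combination hc0
    simp only [heq]
    have : Filter.Tendsto (fun k => Real.exp (-(lam * tk k))) Filter.atTop (nhds 0) := by
      apply Real.tendsto_exp_atBot.comp
      exact Filter.tendsto_neg_atBot_iff.mpr (htk.const_mul_atTop hlam)
    simpa using this.mul_const (S (y 0) - τ)
  have h2 : Filter.Tendsto (fun k => S (y (tk k)) - τ) Filter.atTop (nhds (S ybar - τ)) :=
    ((hS.continuous.tendsto ybar).comp hlim).sub_const τ
  have := tendsto_nhds_unique h2 h1
  linarith
end

section
/- Let y : [0,∞) → E be a nonconformity flow trajectory, let m > 0 and t₀ ≥ 0, and assume ‖∇S(y(t))‖ ≥ m for all t ≥ t₀. Then for every t ≥ t₀, the speed of the trajectory satisfies ‖y'(t)‖ ≤ (λ/m)·|S(y(0)) − τ|·e^{−λ t}. -/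
open scoped RealInnerProductSpace

/-- if `‖∇S(y(t))‖ ≥ m` for all `t ≥ t₀`, the trajectory speed
satisfies `‖y'(t)‖ ≤ (λ/m) |S(y(0)) - τ| e^{-λ t}` for `t ≥ t₀`. -/
theorem speed_exponential_bound {n : ℕ} (S : EuclideanSpace ℝ (Fin n) → ℝ)
    (hS : Differentiable ℝ S) (τ lam : ℝ) (hlam : 0 < lam)
    (y : ℝ → EuclideanSpace ℝ (Fin n))
    (hy : ∀ t : ℝ, 0 ≤ t → HasDerivAt y (ncVel S τ lam (y t)) t)
    (hgrad : ∀ t : ℝ, 0 ≤ t → gradient S (y t) ≠ 0)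
    (m t₀ : ℝ) (hm : 0 < m) (ht₀ : 0 ≤ t₀)
    (hlow : ∀ t : ℝ, t₀ ≤ t → m ≤ ‖gradient S (y t)‖) :
    ∀ t : ℝ, t₀ ≤ t →
      ‖deriv y t‖ ≤ (lam / m) * |S (y 0) - τ| * Real.exp (-lam * t) := by
  -- g t = S (y t) - τ
  set g : ℝ → ℝ := fun t => S (y t) - τ with hg
  have hgderiv : ∀ t : ℝ, 0 ≤ t → HasDerivAt g (-lam * g t) t := by
    intro t ht
    have h1 : HasDerivAt (fun t => S (y t))
        ((fderiv ℝ S (y t)) (ncVel S τ lam (y t))) t :=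
      (hS (y t)).hasFDerivAt.comp_hasDerivAt t (hy t ht)
    have h2 : (fderiv ℝ S (y t)) (ncVel S τ lam (y t)) = -lam * g t := by
      have hG := ((hS (y t)).hasGradientAt).hasFDerivAt
      have : (fderiv ℝ S (y t)) (ncVel S τ lam (y t))
          = ⟪gradient S (y t), ncVel S τ lam (y t)⟫ := by
        rw [hG.fderiv]; simp [InnerProductSpace.toDual_apply_apply]
      rw [this, ncVel, real_inner_smul_right, real_inner_self_eq_norm_sq]
      have hne : ‖gradient S (y t)‖ ^ 2 ≠ 0 :=
        pow_ne_zero 2 (norm_ne_zero_iff.2 (hgrad t ht))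
      rw [div_mul_cancel₀ _ hne]
    exact (h2 ▸ h1).sub_const τ
  -- h t = g t * exp (lam * t) is constant on [0, ∞)
  have hconst : ∀ t : ℝ, 0 ≤ t → g t * Real.exp (lam * t) = g 0 := by
    intro t ht
    have := constant_of_has_deriv_right_zero (f := fun t => g t * Real.exp (lam * t))
      (a := 0) (b := t)
      (by
        apply ContinuousOn.mul
        · exact fun s hs => ((hgderiv s hs.1).continuousAt).continuousWithinAt
        · exact (Real.continuous_exp.comp (continuous_const.mul continuous_id)).continuousOn)
      (by
        intro s hs
        have h1 : HasDerivAt (fun t => g t * Real.exp (lam * t))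
            ((-lam * g s) * Real.exp (lam * s) + g s * (Real.exp (lam * s) * lam)) s := by
          exact (hgderiv s hs.1).mul ((Real.hasDerivAt_exp (lam*s)).comp s
            ((hasDerivAt_id s).const_mul lam) |>.congr_deriv (by ring))
        have h2 : (-lam * g s) * Real.exp (lam * s) + g s * (Real.exp (lam * s) * lam) = 0 := by ring
        exact (h2 ▸ h1).hasDerivWithinAt)
    simpa using this t (Set.right_mem_Icc.2 ht)
  intro t ht
  have ht0 : (0:ℝ) ≤ t := le_trans ht₀ ht
  have hgt : g t = g 0 * Real.exp (-lam * t) := by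
    have h := hconst t ht0
    have : Real.exp (lam * t) ≠ 0 := Real.exp_ne_zero _
    field_simp [Real.exp_neg, neg_mul] at h ⊢
    rw [← hconst t ht0, mul_assoc, ← Real.exp_add]; simp
  have hderiv : deriv y t = ncVel S τ lam (y t) := (hy t ht0).deriv
  rw [hderiv, ncVel, norm_smul]
  have hne : ‖gradient S (y t)‖ ≠ 0 := norm_ne_zero_iff.2 (hgrad t ht0)
  have hpos : 0 < ‖gradient S (y t)‖ := lt_of_lt_of_le hm (hlow t ht)
  rw [Real.norm_eq_abs, abs_div, abs_mul]
  have : |(-lam)| = lam := by rw [abs_neg, abs_of_pos hlam]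
  rw [this]
  have habs : |S (y t) - τ| = |g 0| * Real.exp (-lam * t) := by
    rw [show S (y t) - τ = g t from rfl, hgt, abs_mul, abs_of_pos (Real.exp_pos _)]
  rw [habs]
  have h2 : |‖gradient S (y t)‖ ^ 2| = ‖gradient S (y t)‖ ^ 2 := abs_of_pos (by positivity)
  rw [h2]
  have key : lam * (|g 0| * Real.exp (-lam * t)) / ‖gradient S (y t)‖ ^ 2 * ‖gradient S (y t)‖
      = lam * |g 0| * Real.exp (-lam * t) / ‖gradient S (y t)‖ := by
    field_simp
  rw [key]
  rw [div_le_iff₀ hpos]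
  have : (lam / m) * |S (y 0) - τ| * Real.exp (-lam * t) * ‖gradient S (y t)‖
      = lam * |g 0| * Real.exp (-lam * t) * (‖gradient S (y t)‖ / m) := by
    rw [hg]; ring
  rw [this]
  exact le_mul_of_one_le_right (by positivity) ((one_le_div hm).2 (hlow t ht))
end

section
/- Let y : [0,∞) → E be a nonconformity flow trajectory, let m > 0 and t₀ ≥ 0, and assume ‖∇S(y(t))‖ ≥ m for all t ≥ t₀. Then the trajectory has finite arc length on [t₀, ∞): the integral ∫_{t₀}^∞ ‖y'(u)‖ du is finite, and moreover ∫_{t}^∞ ‖y'(u)‖ du ≤ (1/m)·|S(y(0)) − τ|·e^{−λ t} for every t ≥ t₀. -/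
open scoped RealInnerProductSpace

open MeasureTheory

/-- if `‖∇S(y(t))‖ ≥ m` for all `t ≥ t₀`, the trajectory has
finite arc length on `[t₀, ∞)`, and the tail arc length satisfies
`∫_t^∞ ‖y'(u)‖ du ≤ (1/m) |S(y(0)) - τ| e^{-λ t}` for every `t ≥ t₀`. -/
theorem finite_arc_length {n : ℕ} (S : EuclideanSpace ℝ (Fin n) → ℝ)
    (hS : Differentiable ℝ S) (τ lam : ℝ) (hlam : 0 < lam)
    (y : ℝ → EuclideanSpace ℝ (Fin n))
    (hy : ∀ t : ℝ, 0 ≤ t → HasDerivAt y (ncVel S τ lam (y t)) t)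
    (hgrad : ∀ t : ℝ, 0 ≤ t → gradient S (y t) ≠ 0)
    (m t₀ : ℝ) (hm : 0 < m) (ht₀ : 0 ≤ t₀)
    (hlow : ∀ t : ℝ, t₀ ≤ t → m ≤ ‖gradient S (y t)‖) :
    IntegrableOn (fun u => ‖deriv y u‖) (Set.Ici t₀) volume ∧
      ∀ t : ℝ, t₀ ≤ t →
        ∫ u in Set.Ioi t, ‖deriv y u‖ ≤
          (1 / m) * |S (y 0) - τ| * Real.exp (-lam * t) := by
  set C : ℝ := |S (y 0) - τ| with hCdef
  have hC0 : 0 ≤ C := by rw [hCdef]; positivity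
  -- derivative of t ↦ S (y t)
  have hg : ∀ t : ℝ, 0 ≤ t →
      HasDerivAt (fun u => S (y u)) (-lam * (S (y t) - τ)) t := by
    intro t ht
    have hgr := (hS (y t)).hasGradientAt
    have h1 : HasDerivAt (fun u => S (y u))
        (⟪gradient S (y t), ncVel S τ lam (y t)⟫) t := by
      have := hgr.hasFDerivAt.comp_hasDerivAt t (hy t ht)
      simpa [InnerProductSpace.toDual_apply_apply, Function.comp_def] using this
    have hne : ‖gradient S (y t)‖ ≠ 0 := norm_ne_zero_iff.2 (hgrad t ht)
    have heq : ⟪gradient S (y t), ncVel S τ lam (y t)⟫ = -lam * (S (y t) - τ) := by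
      rw [ncVel, real_inner_smul_right, real_inner_self_eq_norm_sq]
      field_simp
    rwa [heq] at h1
  -- solve: S (y t) - τ = (S (y 0) - τ) * exp (-lam * t)
  have hsol : ∀ t : ℝ, 0 ≤ t →
      S (y t) - τ = (S (y 0) - τ) * Real.exp (-lam * t) := by
    intro t ht
    have key : ∀ x ∈ Set.Icc 0 t,
        (fun u => (S (y u) - τ) * Real.exp (lam * u)) x
          = (S (y 0) - τ) * Real.exp (lam * 0) := by
      apply constant_of_has_deriv_right_zero
      · intro x hx
        exact (((hg x hx.1).sub_const τ).mul
          ((Real.hasDerivAt_exp _).comp x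
            ((hasDerivAt_id x).const_mul lam))).continuousAt.continuousWithinAt
      · intro x hx
        have hd : HasDerivAt (fun u => (S (y u) - τ) * Real.exp (lam * u))
            ((-lam * (S (y x) - τ)) * Real.exp (lam * x)
              + (S (y x) - τ) * (Real.exp (lam * x) * lam)) x := by
          have he : HasDerivAt (fun u => Real.exp (lam * u))
              (Real.exp (lam * x) * lam) x := by
            simpa [mul_comm, Function.comp_def] using
              ((Real.hasDerivAt_exp (lam * x)).comp x
                ((hasDerivAt_id x).const_mul lam))
          exact ((hg x hx.1).sub_const τ).mul he
        have hz : (-lam * (S (y x) - τ)) * Real.exp (lam * x)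
              + (S (y x) - τ) * (Real.exp (lam * x) * lam) = 0 := by ring
        rw [hz] at hd
        exact hd.hasDerivWithinAt
    have hk := key t ⟨ht, le_rfl⟩
    simp only [mul_zero, Real.exp_zero, mul_one] at hk
    have hexp : Real.exp (lam * t) ≠ 0 := Real.exp_ne_zero _
    rw [neg_mul, Real.exp_neg]
    field_simp
    linarith [hk]
  -- norm of the derivative
  have hderiv : ∀ t : ℝ, 0 ≤ t → deriv y t = ncVel S τ lam (y t) := fun t ht =>
    (hy t ht).deriv
  have hnorm : ∀ t : ℝ, t₀ ≤ t →
      ‖deriv y t‖ ≤ (lam * C / m) * Real.exp (-lam * t) := by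
    intro t ht
    have ht0 : (0 : ℝ) ≤ t := le_trans ht₀ ht
    have hgpos : 0 < ‖gradient S (y t)‖ := lt_of_lt_of_le hm (hlow t ht)
    have hne : ‖gradient S (y t)‖ ≠ 0 := ne_of_gt hgpos
    have heq : ‖deriv y t‖ = lam * |S (y t) - τ| / ‖gradient S (y t)‖ := by
      rw [hderiv t ht0, ncVel, norm_smul, norm_div, norm_mul, norm_neg,
        Real.norm_eq_abs, Real.norm_eq_abs, Real.norm_eq_abs,
        abs_of_pos hlam,
        abs_of_nonneg (by positivity : (0:ℝ) ≤ ‖gradient S (y t)‖ ^ 2)]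
      field_simp
    rw [heq, hsol t ht0, abs_mul, abs_of_pos (Real.exp_pos _), ← hCdef,
      div_le_iff₀ hgpos]
    have h2 : lam * C / m * Real.exp (-lam * t) * m
        ≤ lam * C / m * Real.exp (-lam * t) * ‖gradient S (y t)‖ :=
      mul_le_mul_of_nonneg_left (hlow t ht) (by positivity)
    have h3 : lam * C / m * Real.exp (-lam * t) * m
        = lam * (C * Real.exp (-lam * t)) := by field_simp
    nlinarith [h2, h3]
  -- integrable bounding function
  have hbint : ∀ a : ℝ, IntegrableOn
      (fun u => (lam * C / m) * Real.exp (-lam * u)) (Set.Ioi a) volume :=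
    fun a => (exp_neg_integrableOn_Ioi a hlam).const_mul _
  have hint : IntegrableOn (fun u => ‖deriv y u‖) (Set.Ici t₀) volume := by
    rw [integrableOn_Ici_iff_integrableOn_Ioi]
    apply Integrable.mono' (hbint t₀)
      (((measurable_deriv y).norm).aestronglyMeasurable)
    filter_upwards [ae_restrict_mem measurableSet_Ioi] with u hu
    simpa using hnorm u (le_of_lt hu)
  refine ⟨hint, fun t ht => ?_⟩
  have hintt : IntegrableOn (fun u => ‖deriv y u‖) (Set.Ioi t) volume :=
    hint.mono_set (Set.Ioi_subset_Ici ht)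
  -- value of the integral of the bound
  have hlin : Filter.Tendsto (fun u : ℝ => -lam * u) Filter.atTop Filter.atBot := by
    have h1 : Filter.Tendsto (fun u : ℝ => lam * u) Filter.atTop Filter.atTop :=
      Filter.Tendsto.const_mul_atTop hlam Filter.tendsto_id
    have h2 : Filter.Tendsto (fun u : ℝ => -(lam * u)) Filter.atTop Filter.atBot :=
      Filter.tendsto_neg_atTop_atBot.comp h1
    exact h2.congr fun u => by ring
  have hexp0 : Filter.Tendsto (fun u : ℝ => Real.exp (-lam * u))
      Filter.atTop (nhds 0) := Real.tendsto_exp_atBot.comp hlin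
  have htend : Filter.Tendsto (fun u : ℝ => -Real.exp (-lam * u) / lam)
      Filter.atTop (nhds 0) := by
    simpa using hexp0.neg.div_const lam
  have hF : ∀ x ∈ Set.Ioi t, HasDerivAt (fun u => -Real.exp (-lam * u) / lam)
      (Real.exp (-lam * x)) x := by
    intro x _
    have he : HasDerivAt (fun u : ℝ => Real.exp (-lam * u))
        (Real.exp (-lam * x) * (-lam)) x := by
      have h0 : HasDerivAt (fun u : ℝ => -lam * u) (-lam) x := by
        simpa using (hasDerivAt_id x).const_mul (-lam)
      exact h0.exp
    have hd := he.neg.div_const lam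
    exact hd.congr_deriv (by rw [mul_neg, neg_neg, mul_div_assoc, div_self hlam.ne', mul_one])
  have hres := integral_Ioi_of_hasDerivAt_of_tendsto
    (f := fun u : ℝ => -Real.exp (-lam * u) / lam)
    (f' := fun u : ℝ => Real.exp (-lam * u)) (a := t)
    ((Continuous.continuousWithinAt (by fun_prop)))
    hF (exp_neg_integrableOn_Ioi t hlam) htend
  have hval : ∫ u in Set.Ioi t, (lam * C / m) * Real.exp (-lam * u)
      = (1 / m) * C * Real.exp (-lam * t) := by
    rw [MeasureTheory.integral_const_mul, hres]
    field_simp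
    ring
  calc ∫ u in Set.Ioi t, ‖deriv y u‖
      ≤ ∫ u in Set.Ioi t, (lam * C / m) * Real.exp (-lam * u) := by
        apply setIntegral_mono_on hintt (hbint t) measurableSet_Ioi
        intro u hu
        exact hnorm u (le_trans ht hu.le)
    _ = (1 / m) * C * Real.exp (-lam * t) := hval
end

section
/- Let y : [0,∞) → E be a nonconformity flow trajectory, let m > 0 and t₀ ≥ 0, and assume ‖∇S(y(t))‖ ≥ m for all t ≥ t₀. Then y(t) converges as t → ∞ to a unique limit point y_∞ ∈ E, and this limit satisfies S(y_∞) = τ, i.e. y_∞ lies in the level set {z ∈ E : S(z) = τ}. -/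
open scoped RealInnerProductSpace

/-- if `‖∇S(y(t))‖ ≥ m > 0` for all `t ≥ t₀`, the trajectory
converges to a unique limit `y_∞`, which lies in the level set `{z : S z = τ}`. -/
theorem trajectory_converges_to_boundary {n : ℕ} (S : EuclideanSpace ℝ (Fin n) → ℝ)
    (hS : Differentiable ℝ S) (τ lam : ℝ) (hlam : 0 < lam)
    (y : ℝ → EuclideanSpace ℝ (Fin n))
    (hy : ∀ t : ℝ, 0 ≤ t → HasDerivAt y (ncVel S τ lam (y t)) t)
    (hgrad : ∀ t : ℝ, 0 ≤ t → gradient S (y t) ≠ 0)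
    (m t₀ : ℝ) (hm : 0 < m) (ht₀ : 0 ≤ t₀)
    (hlow : ∀ t : ℝ, t₀ ≤ t → m ≤ ‖gradient S (y t)‖) :
    ∃! yinf : EuclideanSpace ℝ (Fin n),
      Filter.Tendsto y Filter.atTop (nhds yinf) ∧ S yinf = τ := by
  -- derivative of h t = S (y t) - τ
  set h : ℝ → ℝ := fun t => S (y t) - τ with hh
  have hd : ∀ t : ℝ, 0 ≤ t → HasDerivAt h (-lam * h t) t := by
    intro t ht
    have hne : (‖gradient S (y t)‖ : ℝ) ^ 2 ≠ 0 :=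
      pow_ne_zero 2 (norm_ne_zero_iff.mpr (hgrad t ht))
    have h2 := ((hS (y t)).hasGradientAt.hasFDerivAt).comp_hasDerivAt t (hy t ht)
    have h3 : HasDerivAt (fun s => S (y s)) (-lam * h t) t := by
      refine h2.congr_deriv ?_
      simp only [InnerProductSpace.toDual_apply_apply, ncVel, real_inner_smul_right,
        real_inner_self_eq_norm_sq]
      field_simp
      rw [mul_div_cancel_right₀ _ (norm_ne_zero_iff.mpr (hgrad t ht))]
    simpa [hh] using h3.sub_const τ
  -- h t = h 0 * exp (-(lam * t))
  have hexp : ∀ t : ℝ, 0 ≤ t → h t = h 0 * Real.exp (-(lam * t)) := by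
    intro t ht
    set f : ℝ → ℝ := fun s => h s * Real.exp (lam * s) with hf
    have hfd : ∀ s : ℝ, 0 ≤ s → HasDerivAt f 0 s := by
      intro s hs
      have he : HasDerivAt (fun s : ℝ => Real.exp (lam * s)) (lam * Real.exp (lam * s)) s := by
        have := (Real.hasDerivAt_exp (lam * s)).comp s ((hasDerivAt_id s).const_mul lam)
        simpa [mul_comm, Function.comp_def] using this
      have := (hd s hs).mul he
      refine this.congr_deriv ?_
      ring
    have hconst : f t = f 0 :=
      constant_of_has_deriv_right_zero (a := 0) (b := t) (f := f)
        (fun s hs => (hfd s hs.1).continuousAt.continuousWithinAt)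
        (fun s hs => (hfd s hs.1).hasDerivWithinAt) t ⟨ht, le_rfl⟩
    have h0 : f 0 = h 0 := by simp [hf]
    have heq : h t * Real.exp (lam * t) = h 0 := by rw [← h0, ← hconst]
    have hexp' : Real.exp (lam * t) ≠ 0 := Real.exp_ne_zero _
    field_simp [Real.exp_neg] at heq ⊢
    rw [Real.exp_neg, ← heq, mul_assoc, mul_inv_cancel₀ hexp', mul_one]
  set C : ℝ := |h 0| with hC
  have hCnn : 0 ≤ C := abs_nonneg _
  set K : ℝ := C / m with hK
  have hKnn : 0 ≤ K := div_nonneg hCnn hm.le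
  -- norm bound on the velocity for t ≥ t₀
  have hvel : ∀ t : ℝ, t₀ ≤ t → ‖ncVel S τ lam (y t)‖ ≤ lam * K * Real.exp (-(lam * t)) := by
    intro t ht
    have ht0 : (0 : ℝ) ≤ t := le_trans ht₀ ht
    have hgn : 0 < ‖gradient S (y t)‖ := lt_of_lt_of_le hm (hlow t ht)
    have hnv : ‖ncVel S τ lam (y t)‖ = lam * |h t| / ‖gradient S (y t)‖ := by
      rw [ncVel, norm_smul, Real.norm_eq_abs, abs_div, abs_mul, abs_neg, abs_of_pos hlam,
        abs_pow, abs_norm]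
      have h1 : |S (y t) - τ| = |h t| := rfl
      rw [h1, pow_two]
      field_simp
      all_goals ring
    have habs : |h t| = C * Real.exp (-(lam * t)) := by
      rw [hexp t ht0, abs_mul, abs_of_pos (Real.exp_pos _), hC]
    have key2 : lam * (C * Real.exp (-(lam * t))) / m * m
        ≤ lam * (C * Real.exp (-(lam * t))) / m * ‖gradient S (y t)‖ :=
      mul_le_mul_of_nonneg_left (hlow t ht) (by positivity)
    rw [div_mul_cancel₀ _ hm.ne'] at key2
    rw [hnv, habs, div_le_iff₀ hgn, hK]
    have heq2 : lam * (C / m) * Real.exp (-(lam * t)) * ‖gradient S (y t)‖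
        = lam * (C * Real.exp (-(lam * t))) / m * ‖gradient S (y t)‖ := by ring
    linarith [key2, heq2]
  -- distance bound : for t₀ ≤ a ≤ b, ‖y b - y a‖ ≤ K * exp (-(lam * a))
  have hdist : ∀ a b : ℝ, t₀ ≤ a → a ≤ b → ‖y b - y a‖ ≤ K * Real.exp (-(lam * a)) := by
    intro a b ha hab
    set B : ℝ → ℝ := fun x => K * Real.exp (-(lam * a)) - K * Real.exp (-(lam * x)) with hB
    have hB' : ∀ x : ℝ, HasDerivAt B (lam * K * Real.exp (-(lam * x))) x := by
      intro x
      have he : HasDerivAt (fun x : ℝ => Real.exp (-(lam * x)))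
          (-lam * Real.exp (-(lam * x))) x := by
        have := (Real.hasDerivAt_exp (-(lam * x))).comp x
          (((hasDerivAt_id x).const_mul lam).neg)
        simpa [mul_comm, Function.comp_def] using this
      have := ((he.const_mul K).neg).const_add (K * Real.exp (-(lam * a)))
      refine this.congr_deriv ?_
      ring
    have key : ∀ x ∈ Set.Icc a b, ‖y x - y a‖ ≤ B x := by
      apply image_norm_le_of_norm_deriv_right_le_deriv_boundary
        (f := fun x => y x - y a) (f' := fun x => ncVel S τ lam (y x))
      · intro x hx
        exact (((hy x (le_trans ht₀ (le_trans ha hx.1))).sub_const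
          (y a)).continuousAt).continuousWithinAt
      · intro x hx
        exact ((hy x (le_trans ht₀ (le_trans ha hx.1))).sub_const (y a)).hasDerivWithinAt
      · simp [hB]
      · exact hB'
      · intro x hx
        exact hvel x (le_trans ha hx.1)
    have hkb := key b ⟨hab, le_rfl⟩
    have hBb : B b = K * Real.exp (-(lam * a)) - K * Real.exp (-(lam * b)) := rfl
    have hpos : 0 ≤ K * Real.exp (-(lam * b)) := by positivity
    linarith [hkb, hBb ▸ hkb]
  -- the basic exponential limit
  have h1' : Filter.Tendsto (fun t : ℝ => lam * t) Filter.atTop Filter.atTop :=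
    Filter.Tendsto.const_mul_atTop hlam Filter.tendsto_id
  have h2' : Filter.Tendsto (fun t : ℝ => Real.exp (-(lam * t))) Filter.atTop (nhds 0) :=
    Real.tendsto_exp_neg_atTop_nhds_zero.comp h1'
  -- y is Cauchy at atTop
  have hcauchy : CauchySeq y := by
    rw [Metric.cauchySeq_iff']
    intro ε hε
    have hlim : Filter.Tendsto (fun t : ℝ => K * Real.exp (-(lam * t)))
        Filter.atTop (nhds 0) := by simpa using h2'.const_mul K
    have hev : ∀ᶠ t in Filter.atTop, K * Real.exp (-(lam * t)) < ε := by
      filter_upwards [hlim.eventually (gt_mem_nhds hε)] with t ht using ht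
    rcases (hev.and (Filter.eventually_ge_atTop t₀)).exists with ⟨N, hN1, hN2⟩
    refine ⟨N, fun t ht => ?_⟩
    rw [dist_eq_norm]
    exact lt_of_le_of_lt (hdist N t hN2 ht) hN1
  obtain ⟨yinf, hyinf⟩ := cauchySeq_tendsto_of_complete hcauchy
  have hlimS : Filter.Tendsto (fun t => S (y t)) Filter.atTop (nhds τ) := by
    have h1 : Filter.Tendsto (fun t : ℝ => τ + h 0 * Real.exp (-(lam * t)))
        Filter.atTop (nhds τ) := by
      have := (h2'.const_mul (h 0)).const_add τ
      simpa using this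
    apply h1.congr'
    filter_upwards [Filter.eventually_ge_atTop (0 : ℝ)] with t ht
    have he := hexp t ht
    have ht' : h t = S (y t) - τ := rfl
    linarith [he, ht']
  have hSyinf : S yinf = τ := by
    have : Filter.Tendsto (fun t => S (y t)) Filter.atTop (nhds (S yinf)) :=
      ((hS yinf).continuousAt.tendsto).comp hyinf
    exact tendsto_nhds_unique this hlimS
  refine ⟨yinf, ⟨hyinf, hSyinf⟩, ?_⟩
  rintro z ⟨hz, -⟩
  exact tendsto_nhds_unique hz hyinf
end

section
/- Let y : [0,∞) → E be a nonconformity flow trajectory, let m > 0 and t₀ ≥ 0, assume ‖∇S(y(t))‖ ≥ m for all t ≥ t₀, and let y_∞ = lim_{t→∞} y(t) be the limit of the trajectory. Then for every t ≥ t₀, ‖y(t) − y_∞‖ ≤ (1/m)·|S(y(0)) − τ|·e^{−λ t}; in particular the trajectory converges to its limit exponentially fast with rate λ. -/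
open scoped RealInnerProductSpace

/-- if `‖∇S(y(t))‖ ≥ m` for `t ≥ t₀` and `y(t) → y_∞`, then
`‖y(t) - y_∞‖ ≤ (1/m) |S(y(0)) - τ| e^{-λ t}` for every `t ≥ t₀`. -/
theorem pointwise_exponential_convergence {n : ℕ} (S : EuclideanSpace ℝ (Fin n) → ℝ)
    (hS : Differentiable ℝ S) (τ lam : ℝ) (hlam : 0 < lam)
    (y : ℝ → EuclideanSpace ℝ (Fin n))
    (hy : ∀ t : ℝ, 0 ≤ t → HasDerivAt y (ncVel S τ lam (y t)) t)
    (hgrad : ∀ t : ℝ, 0 ≤ t → gradient S (y t) ≠ 0)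
    (m t₀ : ℝ) (hm : 0 < m) (ht₀ : 0 ≤ t₀)
    (hlow : ∀ t : ℝ, t₀ ≤ t → m ≤ ‖gradient S (y t)‖)
    (yinf : EuclideanSpace ℝ (Fin n))
    (hlim : Filter.Tendsto y Filter.atTop (nhds yinf)) :
    ∀ t : ℝ, t₀ ≤ t →
      ‖y t - yinf‖ ≤ (1 / m) * |S (y 0) - τ| * Real.exp (-lam * t) := by
  set f : ℝ → ℝ := fun t => S (y t) - τ with hf
  -- derivative of f
  have hderiv : ∀ t : ℝ, 0 ≤ t → HasDerivAt f (-lam * f t) t := by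
    intro t ht
    have hg := (hS (y t)).hasGradientAt
    have h1 : HasDerivAt (fun u => S (y u))
        ((InnerProductSpace.toDual ℝ _ (gradient S (y t))) (ncVel S τ lam (y t))) t :=
      (hg.hasFDerivAt).comp_hasDerivAt t (hy t ht)
    have h2 : (InnerProductSpace.toDual ℝ _ (gradient S (y t))) (ncVel S τ lam (y t))
        = -lam * f t := by
      have hne : ‖gradient S (y t)‖ ^ 2 ≠ 0 := by
        simpa using pow_ne_zero 2 (norm_ne_zero_iff.2 (hgrad t ht))
      simp only [InnerProductSpace.toDual_apply_apply, ncVel, real_inner_smul_right,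
        real_inner_self_eq_norm_sq]
      field_simp
      rw [mul_div_assoc, div_self (norm_ne_zero_iff.2 (hgrad t ht)), mul_one]
    rw [← h2]
    exact h1.sub_const τ
  -- f t = f 0 * exp(-lam t)
  have hfexp : ∀ t : ℝ, 0 ≤ t → f t = f 0 * Real.exp (-lam * t) := by
    intro t ht
    set g : ℝ → ℝ := fun u => f u * Real.exp (lam * u) with hgdef
    have hgd : ∀ u : ℝ, 0 ≤ u → HasDerivAt g 0 u := by
      intro u hu
      have he : HasDerivAt (fun u : ℝ => Real.exp (lam * u)) (lam * Real.exp (lam * u)) u := by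
        simpa [mul_comm] using ((hasDerivAt_id u).const_mul lam).exp
      have := (hderiv u hu).mul he
      exact this.congr_deriv (by ring)
    have hgc : g t = g 0 := by
      rcases eq_or_lt_of_le ht with h|h
      · rw [← h]
      · have := constant_of_has_deriv_right_zero (f := g) (a := 0) (b := t)
          (fun u hu => ((hgd u hu.1).continuousAt).continuousWithinAt)
          (fun u hu => (hgd u hu.1).hasDerivWithinAt)
        exact this t ⟨ht, le_refl t⟩
    have : f t * Real.exp (lam * t) = f 0 := by simpa [hgdef] using hgc
    have h3 := congrArg (fun x => x * Real.exp (-lam * t)) this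
    simpa [mul_assoc, ← Real.exp_add] using h3
  -- speed bound
  have hspeed : ∀ u : ℝ, t₀ ≤ u →
      ‖ncVel S τ lam (y u)‖ ≤ (|f 0| / m) * (lam * Real.exp (-lam * u)) := by
    intro u hu
    have hu0 : (0:ℝ) ≤ u := le_trans ht₀ hu
    have hgn : 0 < ‖gradient S (y u)‖ := lt_of_lt_of_le hm (hlow u hu)
    have h1 : ‖ncVel S τ lam (y u)‖ = lam * |f u| / ‖gradient S (y u)‖ := by
      rw [ncVel, norm_smul, Real.norm_eq_abs]
      rw [abs_div, abs_mul, abs_neg, abs_of_pos hlam]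
      rw [abs_of_nonneg (by positivity : (0:ℝ) ≤ ‖gradient S (y u)‖ ^ 2)]
      field_simp
      ring
    rw [h1, hfexp u hu0]
    rw [abs_mul, abs_of_pos (Real.exp_pos _)]
    rw [div_le_iff₀ hgn]
    have : (|f 0| / m) * (lam * Real.exp (-lam * u)) * ‖gradient S (y u)‖
        ≥ (|f 0| / m) * (lam * Real.exp (-lam * u)) * m := by
      apply mul_le_mul_of_nonneg_left (hlow u hu)
      positivity
    calc lam * (|f 0| * Real.exp (-lam * u)) = (|f 0| / m) * (lam * Real.exp (-lam * u)) * m := by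
            field_simp
      _ ≤ _ := this
  intro t ht
  have ht0 : (0:ℝ) ≤ t := le_trans ht₀ ht
  set C := |f 0| / m with hC
  have hCnn : 0 ≤ C := by positivity
  -- for all s ≥ t, ‖y s - y t‖ ≤ C * (exp(-lam t) - exp(-lam s))
  have hkey : ∀ s : ℝ, t ≤ s → ‖y s - y t‖ ≤ C * Real.exp (-lam * t) := by
    intro s hs
    set B : ℝ → ℝ := fun u => C * (Real.exp (-lam * t) - Real.exp (-lam * u)) with hB
    have hB' : ∀ x : ℝ, HasDerivAt B (C * (lam * Real.exp (-lam * x))) x := by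
      intro x
      have he : HasDerivAt (fun u : ℝ => Real.exp (-lam * u)) (-lam * Real.exp (-lam * x)) x := by
        simpa [mul_comm] using ((hasDerivAt_id x).const_mul (-lam)).exp
      have := ((hasDerivAt_const x (Real.exp (-lam * t))).sub he).const_mul C
      exact this.congr_deriv (by ring)
    have hmain := image_norm_le_of_norm_deriv_right_le_deriv_boundary
      (f := fun u => y u - y t) (a := t) (b := s)
      (f' := fun u => ncVel S τ lam (y u))
      (fun u hu => (((hy u (le_trans ht0 hu.1)).sub_const (y t)).continuousAt).continuousWithinAt)
      (fun u hu => (((hy u (le_trans ht0 hu.1)).sub_const (y t)).hasDerivWithinAt))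
      (by simp [hB])
      hB'
      (fun u hu => hspeed u (le_trans ht hu.1))
    have h4 := hmain ⟨hs, le_refl s⟩
    refine le_trans h4 ?_
    rw [hB]
    have : Real.exp (-lam * t) - Real.exp (-lam * s) ≤ Real.exp (-lam * t) := by
      have := Real.exp_pos (-lam * s); linarith
    exact mul_le_mul_of_nonneg_left this hCnn
  -- take limit s → ∞
  have hlim2 : Filter.Tendsto (fun s => ‖y s - y t‖) Filter.atTop (nhds ‖yinf - y t‖) :=
    ((hlim.sub_const (y t)).norm)
  have hfinal : ‖yinf - y t‖ ≤ C * Real.exp (-lam * t) :=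
    le_of_tendsto hlim2 (Filter.eventually_atTop.2 ⟨t, fun s hs => hkey s hs⟩)
  rw [← norm_sub_rev] at hfinal
  calc ‖y t - yinf‖ ≤ C * Real.exp (-lam * t) := hfinal
    _ = (1 / m) * |S (y 0) - τ| * Real.exp (-lam * t) := by rw [hC, hf]; ring
end

section
/- Let y : [0,∞) → E be a nonconformity flow trajectory, let ε > 0, and assume |S(y(0)) − τ| > ε. Define the ε-hitting time T_ε := inf { t ≥ 0 : |S(y(t)) − τ| ≤ ε }. Then T_ε = (1/λ)·log( |S(y(0)) − τ| / ε ). -/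
open scoped RealInnerProductSpace

/-- the ε-hitting time of a nonconformity flow trajectory equals
`(1/λ) log(|S(y(0)) - τ| / ε)`. -/
theorem eps_hitting_time {n : ℕ} (S : EuclideanSpace ℝ (Fin n) → ℝ)
    (hS : Differentiable ℝ S) (τ lam : ℝ) (hlam : 0 < lam)
    (y : ℝ → EuclideanSpace ℝ (Fin n))
    (hy : ∀ t : ℝ, 0 ≤ t → HasDerivAt y (ncVel S τ lam (y t)) t)
    (hgrad : ∀ t : ℝ, 0 ≤ t → gradient S (y t) ≠ 0)
    (ε : ℝ) (hε : 0 < ε) (h0 : ε < |S (y 0) - τ|) :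
    sInf {t : ℝ | 0 ≤ t ∧ |S (y t) - τ| ≤ ε} =
      (1 / lam) * Real.log (|S (y 0) - τ| / ε) := by
  set f : ℝ → ℝ := fun t => S (y t) - τ with hfdef
  have hf' : ∀ t : ℝ, 0 ≤ t → HasDerivAt f (-lam * f t) t := by
    intro t ht
    have hg := (hS (y t)).hasGradientAt
    have hcomp : HasDerivAt (fun s => S (y s))
        ((InnerProductSpace.toDual ℝ _ (gradient S (y t))) (ncVel S τ lam (y t))) t :=
      hg.hasFDerivAt.comp_hasDerivAt t (hy t ht)
    have hval : (InnerProductSpace.toDual ℝ _ (gradient S (y t))) (ncVel S τ lam (y t))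
        = -lam * f t := by
      rw [InnerProductSpace.toDual_apply_apply]
      unfold ncVel
      rw [real_inner_smul_right, real_inner_self_eq_norm_sq]
      have hne : ‖gradient S (y t)‖ ^ 2 ≠ 0 :=
        pow_ne_zero 2 (norm_ne_zero_iff.mpr (hgrad t ht))
      rw [sq] at hne ⊢
      field_simp
      rw [mul_div_assoc, div_self (norm_ne_zero_iff.mpr (hgrad t ht)), mul_one]
    have := hcomp.sub_const τ
    rw [hval] at this
    exact this
  -- auxiliary function g t = f t * exp (lam * t) is constant on [0, ∞)
  have hg' : ∀ t : ℝ, 0 ≤ t → HasDerivAt (fun s => f s * Real.exp (lam * s)) 0 t := by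
    intro t ht
    have hlin : HasDerivAt (fun s : ℝ => lam * s) lam t := by
      simpa using (hasDerivAt_id t).const_mul lam
    have he : HasDerivAt (fun s => Real.exp (lam * s)) (Real.exp (lam * t) * lam) t :=
      (Real.hasDerivAt_exp (lam * t)).comp t hlin
    have := (hf' t ht).fun_mul he
    refine this.congr_deriv ?_
    ring
  have hsol : ∀ t : ℝ, 0 ≤ t → f t = f 0 * Real.exp (-(lam * t)) := by
    intro t ht
    have hconst := constant_of_has_deriv_right_zero
      (f := fun s => f s * Real.exp (lam * s)) (a := 0) (b := t)
      (fun s hs => ((hg' s hs.1).continuousAt).continuousWithinAt)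
      (fun s hs => ((hg' s hs.1).hasDerivWithinAt))
    have h1 := hconst t (Set.right_mem_Icc.mpr ht)
    simp only [mul_zero, Real.exp_zero, mul_one] at h1
    have hexp : Real.exp (lam * t) ≠ 0 := Real.exp_ne_zero _
    rw [← h1, Real.exp_neg, mul_assoc, mul_inv_cancel₀ hexp, mul_one]
  set A := |S (y 0) - τ| with hA
  have hA0 : (0:ℝ) < A := lt_trans hε h0
  set T := (1 / lam) * Real.log (A / ε) with hT
  have hT0 : 0 < T := by
    apply mul_pos (by positivity)
    apply Real.log_pos
    rw [lt_div_iff₀ hε]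
    simpa using h0
  have habs : ∀ t : ℝ, 0 ≤ t → |f t| = A * Real.exp (-(lam * t)) := by
    intro t ht
    rw [hsol t ht, abs_mul, abs_of_pos (Real.exp_pos _)]
  have hset : {t : ℝ | 0 ≤ t ∧ |S (y t) - τ| ≤ ε} = Set.Ici T := by
    ext t
    simp only [Set.mem_setOf_eq, Set.mem_Ici]
    constructor
    · rintro ⟨ht, hle⟩
      have h2 : A * Real.exp (-(lam * t)) ≤ ε := by rw [← habs t ht]; exact hle
      have h3 : Real.exp (-(lam * t)) ≤ ε / A := by
        rw [le_div_iff₀ hA0]; linarith [h2]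
      have h4 : -(lam * t) ≤ Real.log (ε / A) := by
        rw [← Real.log_exp (-(lam * t))]
        exact Real.log_le_log (Real.exp_pos _) h3
      have h5 : Real.log (ε / A) = -Real.log (A / ε) := by
        rw [← Real.log_inv]; congr 1; field_simp
      rw [h5] at h4
      rw [hT, div_mul_eq_mul_div, div_le_iff₀ hlam]
      nlinarith [h4]
    · intro ht
      have ht0 : 0 ≤ t := le_trans hT0.le ht
      refine ⟨ht0, ?_⟩
      rw [habs t ht0]
      have h4 : Real.log (A / ε) ≤ lam * t := by
        rw [hT, div_mul_eq_mul_div, div_le_iff₀ hlam] at ht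
        nlinarith [ht]
      have h5 : A / ε ≤ Real.exp (lam * t) := by
        rw [← Real.exp_log (by positivity : (0:ℝ) < A/ε)]
        exact Real.exp_le_exp.mpr h4
      rw [Real.exp_neg]
      rw [div_le_iff₀ hε] at h5
      have hexp := Real.exp_pos (lam * t)
      rw [mul_inv_le_iff₀ hexp]  -- A * (exp)⁻¹ ≤ ε
      linarith [h5]
  rw [hset, csInf_Ici]
end

section
/- Let y : [0,∞) → E be a nonconformity flow trajectory, let ε > 0 with |S(y(0)) − τ| > ε, and suppose the velocity scalar is chosen as λ = log( |S(y(0)) − τ| / ε ). Then the ε-hitting time T_ε := inf { t ≥ 0 : |S(y(t)) − τ| ≤ ε } equals 1; that is, the trajectory is within ε of the target level set at time t = 1. -/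
open scoped RealInnerProductSpace

/-- choosing the velocity scalar `λ = log(|S(y(0)) - τ| / ε)`
makes the ε-hitting time equal to `1`. -/
theorem eps_hitting_time_one {n : ℕ} (S : EuclideanSpace ℝ (Fin n) → ℝ)
    (hS : Differentiable ℝ S) (τ lam : ℝ) (hlam : 0 < lam)
    (y : ℝ → EuclideanSpace ℝ (Fin n))
    (hy : ∀ t : ℝ, 0 ≤ t → HasDerivAt y (ncVel S τ lam (y t)) t)
    (hgrad : ∀ t : ℝ, 0 ≤ t → gradient S (y t) ≠ 0)
    (ε : ℝ) (hε : 0 < ε) (h0 : ε < |S (y 0) - τ|)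
    (hchoice : lam = Real.log (|S (y 0) - τ| / ε)) :
    sInf {t : ℝ | 0 ≤ t ∧ |S (y t) - τ| ≤ ε} = 1 := by
  -- derivative of S ∘ y
  have hSy : ∀ t : ℝ, 0 ≤ t →
      HasDerivAt (fun s => S (y s) - τ) (-lam * (S (y t) - τ)) t := by
    intro t ht
    have hg := (hS (y t)).hasGradientAt
    have hcomp := (hg.hasFDerivAt.comp_hasDerivAt t (hy t ht)).sub_const τ
    refine hcomp.congr_deriv ?_
    symm
    simp only [InnerProductSpace.toDual_apply_apply, ncVel]
    rw [real_inner_smul_right, real_inner_self_eq_norm_sq]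
    have hn : ‖gradient S (y t)‖ ^ 2 ≠ 0 :=
      pow_ne_zero 2 (norm_ne_zero_iff.2 (hgrad t ht))
    have hn' : ‖gradient S (y t)‖ ≠ 0 := norm_ne_zero_iff.2 (hgrad t ht)
    field_simp
  -- g t = (S(y t) - τ) * exp(lam t) is constant on [0,∞)
  have key : ∀ t : ℝ, 0 ≤ t →
      S (y t) - τ = (S (y 0) - τ) * Real.exp (-lam * t) := by
    intro t ht
    set g : ℝ → ℝ := fun s => (S (y s) - τ) * Real.exp (lam * s) with hgdef
    have hgd : ∀ s : ℝ, 0 ≤ s → HasDerivAt g 0 s := by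
      intro s hs
      have h1 := (hSy s hs).mul ((Real.hasDerivAt_exp (lam * s)).comp s
        ((hasDerivAt_id s).const_mul lam))
      simp only [Function.comp_apply] at h1
      refine h1.congr_deriv ?_
      ring
    have hconst : g t = g 0 := by
      have := constant_of_has_deriv_right_zero (f := g) (a := 0) (b := t)
        (fun s hs => ((hgd s hs.1).continuousAt).continuousWithinAt)
        (fun s hs => ((hgd s hs.1).hasDerivWithinAt))
      exact this t ⟨ht, le_rfl⟩
    have : (S (y t) - τ) * Real.exp (lam * t) = (S (y 0) - τ) * 1 := by
      simpa [hgdef] using hconst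
    have hexp : Real.exp (lam * t) ≠ 0 := Real.exp_ne_zero _
    rw [neg_mul, Real.exp_neg]
    field_simp at this ⊢
    linarith [this]
  -- the hitting set is Ici 1
  have hc : 0 < |S (y 0) - τ| := lt_trans hε h0
  have hset : {t : ℝ | 0 ≤ t ∧ |S (y t) - τ| ≤ ε} = Set.Ici 1 := by
    ext t
    simp only [Set.mem_setOf_eq, Set.mem_Ici]
    constructor
    · rintro ⟨ht, hle⟩
      rw [key t ht, abs_mul, Real.abs_exp] at hle
      by_contra hlt
      push_neg at hlt
      have h1 : Real.exp (-lam * 1) < Real.exp (-lam * t) := by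
        apply Real.exp_lt_exp.2; nlinarith
      have h2 : Real.exp (-lam) = ε / |S (y 0) - τ| := by
        rw [hchoice, ← Real.log_inv, Real.exp_log (by positivity)]
        field_simp
      have := mul_lt_mul_of_pos_left h1 hc
      rw [show (-lam * 1 : ℝ) = -lam by ring, h2] at this
      have : ε < |S (y 0) - τ| * Real.exp (-lam * t) := by
        rw [neg_mul] at this ⊢
        field_simp at this; linarith
      linarith
    · intro ht
      have ht0 : (0:ℝ) ≤ t := le_trans zero_le_one ht
      refine ⟨ht0, ?_⟩
      rw [key t ht0, abs_mul, Real.abs_exp]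
      have h1 : Real.exp (-lam * t) ≤ Real.exp (-lam) := by
        apply Real.exp_le_exp.2; nlinarith
      have h2 : Real.exp (-lam) = ε / |S (y 0) - τ| := by
        rw [hchoice, ← Real.log_inv, Real.exp_log (by positivity)]
        field_simp
      calc |S (y 0) - τ| * Real.exp (-lam * t)
          ≤ |S (y 0) - τ| * (ε / |S (y 0) - τ|) := by
            rw [← h2]; exact mul_le_mul_of_nonneg_left h1 hc.le
        _ = ε := by field_simp
  rw [hset, csInf_Ici]
end

section
/- Let y : [0,∞) → E be a differentiable curve satisfying the perturbed dynamics y'(t) = v(y(t)) + w(t), where v is the nonconformity velocity field, ∇S(y(t)) ≠ 0 for all t, and w(t) ∈ E is tangential in the sense that ⟨∇S(y(t)), w(t)⟩ = 0 for all t. Then the score error ε(t) := S(y(t)) − τ still satisfies ε'(t) = −λ ε(t), and hence ε(t) = ε(0)·e^{−λ t}; tangential perturbations do not alter the score dynamics. -/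
open scoped RealInnerProductSpace

/-- tangential perturbations of the nonconformity flow do not
alter the score dynamics: under `y'(t) = v(y(t)) + w(t)` with
`⟪∇S(y(t)), w(t)⟫ = 0`, the score error still satisfies `ε'(t) = -λ ε(t)`
and hence `ε(t) = ε(0) e^{-λ t}`. -/
theorem tangential_perturbation_score_dynamics {n : ℕ}
    (S : EuclideanSpace ℝ (Fin n) → ℝ)
    (hS : Differentiable ℝ S) (τ lam : ℝ) (hlam : 0 < lam)
    (y : ℝ → EuclideanSpace ℝ (Fin n)) (w : ℝ → EuclideanSpace ℝ (Fin n))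
    (hy : ∀ t : ℝ, 0 ≤ t → HasDerivAt y (ncVel S τ lam (y t) + w t) t)
    (hgrad : ∀ t : ℝ, 0 ≤ t → gradient S (y t) ≠ 0)
    (htan : ∀ t : ℝ, 0 ≤ t → ⟪gradient S (y t), w t⟫ = 0) :
    (∀ t : ℝ, 0 ≤ t →
        HasDerivAt (fun s => S (y s) - τ) (-lam * (S (y t) - τ)) t) ∧
      ∀ t : ℝ, 0 ≤ t →
        S (y t) - τ = (S (y 0) - τ) * Real.exp (-lam * t) := by
  have h1 : ∀ t : ℝ, 0 ≤ t →
      HasDerivAt (fun s => S (y s) - τ) (-lam * (S (y t) - τ)) t := by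
    intro t ht
    have hg : HasGradientAt S (gradient S (y t)) (y t) :=
      (hS (y t)).hasGradientAt
    have hfd := hg.hasFDerivAt.comp_hasDerivAt t (hy t ht)
    have hval : ⟪gradient S (y t), ncVel S τ lam (y t) + w t⟫
        = -lam * (S (y t) - τ) := by
      rw [inner_add_right, htan t ht, add_zero]
      simp only [ncVel]
      rw [inner_smul_right, real_inner_self_eq_norm_sq]
      have hne : ‖gradient S (y t)‖ ^ 2 ≠ 0 := by
        simpa using hgrad t ht
      field_simp
      rw [mul_div_assoc, div_self (norm_ne_zero_iff.mpr (hgrad t ht)), mul_one]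
    have : HasDerivAt (fun s => S (y s)) (-lam * (S (y t) - τ)) t := by
      rw [InnerProductSpace.toDual_apply_apply, hval] at hfd
      exact hfd
    simpa using this.sub_const τ
  refine ⟨h1, fun t ht => ?_⟩
  set f : ℝ → ℝ := fun s => (S (y s) - τ) * Real.exp (lam * s) with hf
  have hfd : ∀ s ∈ Set.Ico (0:ℝ) t, HasDerivWithinAt f 0 (Set.Ici s) s := by
    intro s hs
    have hd := (h1 s hs.1).mul (((hasDerivAt_id s).const_mul lam).exp)
    simp only [id_eq, mul_one] at hd
    have : HasDerivAt f 0 s := by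
      exact (hd : HasDerivAt (fun x => (S (y x) - τ) * Real.exp (lam * x)) _ s).congr_deriv (by ring)
    exact this.hasDerivWithinAt
  have hcont : ContinuousOn f (Set.Icc 0 t) := by
    intro s hs
    exact ((h1 s hs.1).mul
      (((hasDerivAt_id s).const_mul lam).exp)).continuousAt.continuousWithinAt
  have hconst := constant_of_has_deriv_right_zero hcont hfd t
    (Set.right_mem_Icc.2 ht)
  have hexp : Real.exp (lam * t) ≠ 0 := Real.exp_ne_zero _
  have : (S (y t) - τ) * Real.exp (lam * t) = S (y 0) - τ := by
    simpa [f] using hconst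
  have := congrArg (· * Real.exp (-lam * t)) this
  simpa [mul_assoc, ← Real.exp_add, neg_mul] using this
end

section
/- Let π be a probability measure on (0,1), and for each α ∈ (0,1) let ν_α be a probability measure on Y supported on the boundary set ∂C_α = {y ∈ Y : S(y) = τ(α)} (i.e. ν_α(∂C_α) = 1), such that for each measurable A ⊆ Y the map α ↦ ν_α(A) is measurable. Assume the threshold map satisfies the nesting property: τ(α) ≤ τ(β) if and only if α ≥ β, for all α, β ∈ (0,1). Define the conformal predictive distribution P(A) := ∫_{(0,1)} ν_α(A) dπ(α). Then for every β ∈ (0,1), P(C_β) = π([β, 1)), where C_β = {y ∈ Y : S(y) ≤ τ(β)}. -/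
open MeasureTheory

/-- the conformal predictive distribution
`P(A) = ∫ ν_α(A) dπ(α)` obtained by mixing boundary-supported measures over
confidence levels satisfies `P(C_β) = π([β, 1))` for every `β ∈ (0,1)`. -/
theorem cpd_calibration {Y : Type*} [MeasurableSpace Y]
    (S : Y → ℝ) (hS : Measurable S) (τ : ℝ → ℝ)
    (hnest : ∀ a ∈ Set.Ioo (0 : ℝ) 1, ∀ b ∈ Set.Ioo (0 : ℝ) 1,
      (τ a ≤ τ b ↔ b ≤ a))
    (π : Measure ℝ) [IsProbabilityMeasure π] (hπ : π (Set.Ioo (0 : ℝ) 1)ᶜ = 0)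
    (ν : ℝ → Measure Y)
    (hprob : ∀ α ∈ Set.Ioo (0 : ℝ) 1, IsProbabilityMeasure (ν α))
    (hsupp : ∀ α ∈ Set.Ioo (0 : ℝ) 1, ν α {y | S y = τ α} = 1)
    (hmeas : ∀ A : Set Y, MeasurableSet A → Measurable fun α => ν α A)
    (β : ℝ) (hβ : β ∈ Set.Ioo (0 : ℝ) 1) :
    ∫⁻ α in Set.Ioo (0 : ℝ) 1, ν α {y | S y ≤ τ β} ∂π = π (Set.Ico β 1) := by
  have key : ∀ α ∈ Set.Ioo (0 : ℝ) 1,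
      ν α {y | S y ≤ τ β} = Set.indicator (Set.Ici β) (fun _ => 1) α := by
    intro α hα
    have hP := hprob α hα
    by_cases hle : β ≤ α
    · rw [Set.indicator_of_mem (Set.mem_Ici.mpr hle)]
      refine le_antisymm prob_le_one ?_
      have hsub : {y | S y = τ α} ⊆ {y | S y ≤ τ β} := by
        intro y hy
        simp only [Set.mem_setOf_eq] at *
        rw [hy]
        exact (hnest α hα β hβ).mpr hle
      calc (1 : ENNReal) = ν α {y | S y = τ α} := (hsupp α hα).symm
        _ ≤ ν α {y | S y ≤ τ β} := measure_mono hsub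
    · rw [Set.indicator_of_notMem (by simpa using hle)]
      have hlt : τ β < τ α := by
        by_contra h
        exact hle ((hnest α hα β hβ).mp (not_lt.mp h))
      have hcompl : ν α {y | S y = τ α}ᶜ = 0 := by
        have hms : MeasurableSet {y : Y | S y = τ α} := hS (measurableSet_singleton (τ α))
        have := measure_compl hms (measure_ne_top (ν α) _)
        rw [hsupp α hα, measure_univ] at this
        simpa using this
      refine measure_mono_null ?_ hcompl
      intro y hy
      simp only [Set.mem_setOf_eq, Set.mem_compl_iff] at *
      intro h
      rw [h] at hy
      exact absurd hy (not_le.mpr hlt)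
  calc ∫⁻ α in Set.Ioo (0 : ℝ) 1, ν α {y | S y ≤ τ β} ∂π
      = ∫⁻ α in Set.Ioo (0 : ℝ) 1, Set.indicator (Set.Ici β) (fun _ => 1) α ∂π := by
        refine setLIntegral_congr_fun measurableSet_Ioo ?_
        exact key
    _ = π (Set.Ici β ∩ Set.Ioo 0 1) := by
        rw [lintegral_indicator measurableSet_Ici]
        simp [Measure.restrict_restrict measurableSet_Ici]
    _ = π (Set.Ico β 1) := by
        congr 1
        ext x
        simp only [Set.mem_inter_iff, Set.mem_Ici, Set.mem_Ioo, Set.mem_Ico]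
        constructor
        · rintro ⟨h1, _, h2⟩; exact ⟨h1, h2⟩
        · rintro ⟨h1, h2⟩; exact ⟨h1, lt_of_lt_of_le hβ.1 h1, h2⟩
end

section
/- Let π be the uniform (Lebesgue) probability measure on (0,1), and for each α ∈ (0,1) let ν_α be a probability measure on Y supported on the boundary set ∂C_α = {y ∈ Y : S(y) = τ(α)} (i.e. ν_α(∂C_α) = 1), such that for each measurable A ⊆ Y the map α ↦ ν_α(A) is measurable. Assume the threshold map satisfies the nesting property: τ(α) ≤ τ(β) if and only if α ≥ β, for all α, β ∈ (0,1). Define P(A) := ∫_{(0,1)} ν_α(A) dα. Then for every β ∈ (0,1), P(C_β) = 1 − β; that is, the conformal predictive distribution is exactly conformally calibrated. -/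
open MeasureTheory

/-- with the uniform mixing measure on `(0,1)`, the conformal
predictive distribution is exactly conformally calibrated:
`P(C_β) = 1 - β` for every `β ∈ (0,1)`. -/
theorem cpd_uniform_calibration {Y : Type*} [MeasurableSpace Y]
    (S : Y → ℝ) (hS : Measurable S) (τ : ℝ → ℝ)
    (hnest : ∀ a ∈ Set.Ioo (0 : ℝ) 1, ∀ b ∈ Set.Ioo (0 : ℝ) 1,
      (τ a ≤ τ b ↔ b ≤ a))
    (ν : ℝ → Measure Y)
    (hprob : ∀ α ∈ Set.Ioo (0 : ℝ) 1, IsProbabilityMeasure (ν α))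
    (hsupp : ∀ α ∈ Set.Ioo (0 : ℝ) 1, ν α {y | S y = τ α} = 1)
    (hmeas : ∀ A : Set Y, MeasurableSet A → Measurable fun α => ν α A)
    (β : ℝ) (hβ : β ∈ Set.Ioo (0 : ℝ) 1) :
    ∫⁻ α in Set.Ioo (0 : ℝ) 1, ν α {y | S y ≤ τ β} =
      ENNReal.ofReal (1 - β) := by
  obtain ⟨hβ0, hβ1⟩ := hβ
  have key : ∀ α ∈ Set.Ioo (0:ℝ) 1,
      ν α {y | S y ≤ τ β} = Set.indicator (Set.Ico β 1) (fun _ => (1:ENNReal)) α := by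
    intro α hα
    have hp := hprob α hα
    have hs := hsupp α hα
    by_cases h : β ≤ α
    · have hτ : τ α ≤ τ β := (hnest α hα β ⟨hβ0, hβ1⟩).mpr h
      have hsub : {y | S y = τ α} ⊆ {y | S y ≤ τ β} := fun y hy => le_trans (le_of_eq hy) hτ
      have h1 : ν α {y | S y ≤ τ β} = 1 :=
        le_antisymm prob_le_one (hs ▸ measure_mono hsub)
      rw [h1, Set.indicator_of_mem (Set.mem_Ico.mpr ⟨h, hα.2⟩)]
    · push_neg at h
      have hτ : τ β < τ α := by
        by_contra hc
        push_neg at hc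
        exact absurd ((hnest α hα β ⟨hβ0, hβ1⟩).mp hc) (not_le.mpr h)
      have hsub : {y | S y ≤ τ β} ⊆ {y | S y = τ α}ᶜ := by
        intro y hy hy'
        have : S y = τ α := hy'
        have : τ α ≤ τ β := this ▸ hy
        exact absurd this (not_le.mpr hτ)
      have hcm : MeasurableSet {y | S y = τ α} := hS (measurableSet_singleton (τ α))
      have hc : ν α {y | S y = τ α}ᶜ = 0 := by
        rw [measure_compl hcm (measure_ne_top _ _), hs, measure_univ]
        simp
      have h0 : ν α {y | S y ≤ τ β} = 0 :=
        le_antisymm (hc ▸ measure_mono hsub) zero_le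
      rw [h0, Set.indicator_of_notMem (fun hm => absurd hm.1 (not_le.mpr h))]
  rw [setLIntegral_congr_fun measurableSet_Ioo key]
  rw [lintegral_indicator measurableSet_Ico]
  simp only [lintegral_one, Measure.restrict_restrict measurableSet_Ico,
    Measure.restrict_apply MeasurableSet.univ, Set.univ_inter]
  have : Set.Ico β 1 ∩ Set.Ioo (0:ℝ) 1 = Set.Ico β 1 := by
    apply Set.inter_eq_left.mpr
    intro x hx
    exact ⟨lt_of_lt_of_le hβ0 hx.1, hx.2⟩
  rw [this, Real.volume_Ico]
end

section
/- Let y : [0,∞) → E be a nonconformity flow trajectory with S(y(0)) ≠ τ. Then for every t ≥ 0 the score error never vanishes, S(y(t)) ≠ τ, the sign of S(y(t)) − τ equals the sign of S(y(0)) − τ, and t ↦ |S(y(t)) − τ| is strictly decreasing; in particular points outside the sublevel set {S ≤ τ} are pushed inward and points strictly inside are pushed outward, monotonically toward the level set {S = τ}. -/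
open scoped RealInnerProductSpace

/-- if `S(y(0)) ≠ τ`, the score error never vanishes, keeps
its initial sign, and `t ↦ |S(y(t)) - τ|` is strictly decreasing on `[0,∞)`:
the flow pushes points monotonically toward the level set `{S = τ}`. -/
theorem score_controlling_monotone {n : ℕ} (S : EuclideanSpace ℝ (Fin n) → ℝ)
    (hS : Differentiable ℝ S) (τ lam : ℝ) (hlam : 0 < lam)
    (y : ℝ → EuclideanSpace ℝ (Fin n))
    (hy : ∀ t : ℝ, 0 ≤ t → HasDerivAt y (ncVel S τ lam (y t)) t)
    (hgrad : ∀ t : ℝ, 0 ≤ t → gradient S (y t) ≠ 0)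
    (h0 : S (y 0) ≠ τ) :
    (∀ t : ℝ, 0 ≤ t → S (y t) ≠ τ) ∧
      (∀ t : ℝ, 0 ≤ t →
        Real.sign (S (y t) - τ) = Real.sign (S (y 0) - τ)) ∧
      StrictAntiOn (fun t => |S (y t) - τ|) (Set.Ici (0 : ℝ)) := by
  set g : ℝ → ℝ := fun t => S (y t) - τ with hgdef
  have hgderiv : ∀ t : ℝ, 0 ≤ t → HasDerivAt g (-lam * g t) t := by
    intro t ht
    have h1 : HasGradientAt S (gradient S (y t)) (y t) := (hS (y t)).hasGradientAt
    have h2 := h1.hasFDerivAt.comp_hasDerivAt t (hy t ht)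
    have hval : ⟪gradient S (y t), ncVel S τ lam (y t)⟫ = -lam * g t := by
      have hn : ‖gradient S (y t)‖ ≠ 0 := norm_ne_zero_iff.mpr (hgrad t ht)
      simp only [ncVel, real_inner_smul_right, real_inner_self_eq_norm_sq]
      field_simp
      rfl
    have h3 : HasDerivAt (fun t => S (y t)) (-lam * g t) t := by
      rw [← hval]; exact h2
    exact h3.sub_const τ
  have hconst : ∀ t : ℝ, 0 ≤ t → g t * Real.exp (lam * t) = g 0 := by
    intro t ht
    have key := constant_of_has_deriv_right_zero (f := fun s => g s * Real.exp (lam * s))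
      (a := 0) (b := t) ?_ ?_ t (Set.right_mem_Icc.mpr ht)
    · simpa using key
    · intro s hs
      have he : HasDerivAt (fun s => Real.exp (lam * s)) (Real.exp (lam*s) * lam) s :=
        (Real.hasDerivAt_exp (lam*s)).comp s (by simpa using (hasDerivAt_id s).const_mul lam)
      exact (((hgderiv s hs.1).mul he).continuousAt).continuousWithinAt
    · intro s hs
      have hd : HasDerivAt (fun s => g s * Real.exp (lam * s)) 0 s := by
        have he : HasDerivAt (fun s => Real.exp (lam * s)) (Real.exp (lam*s) * lam) s :=
          (Real.hasDerivAt_exp (lam*s)).comp s (by simpa using (hasDerivAt_id s).const_mul lam)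
        have := (hgderiv s hs.1).mul he
        refine this.congr_deriv ?_
        ring
      exact hd.hasDerivWithinAt
  have hgval : ∀ t : ℝ, 0 ≤ t → g t = g 0 * Real.exp (-(lam * t)) := by
    intro t ht
    have h := hconst t ht
    have : g t = g 0 / Real.exp (lam * t) := by
      field_simp [Real.exp_ne_zero] at h ⊢
      linarith [h]
    rw [this, Real.exp_neg]
    ring
  have hg0 : g 0 ≠ 0 := sub_ne_zero.mpr h0
  refine ⟨?_, ?_, ?_⟩
  · intro t ht
    have := hgval t ht
    intro hc
    have : g t = 0 := sub_eq_zero.mpr hc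
    rw [hgval t ht] at this
    exact hg0 (by
      have := mul_eq_zero.mp this
      rcases this with h | h
      · exact h
      · exact absurd h (Real.exp_ne_zero _))
  · intro t ht
    rw [show S (y t) - τ = g t from rfl, show S (y 0) - τ = g 0 from rfl, hgval t ht]
    rcases lt_or_gt_of_ne hg0 with h | h
    · rw [Real.sign_of_neg h, Real.sign_of_neg (mul_neg_of_neg_of_pos h (Real.exp_pos _))]
    · rw [Real.sign_of_pos h, Real.sign_of_pos (mul_pos h (Real.exp_pos _))]
  · intro s hs t ht hst
    simp only [Set.mem_Ici] at hs ht
    show |g t| < |g s|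
    rw [hgval t ht, hgval s hs, abs_mul, abs_mul, Real.abs_exp, Real.abs_exp]
    have h0' : 0 < |g 0| := abs_pos.mpr hg0
    exact mul_lt_mul_of_pos_left (Real.exp_lt_exp.mpr (by nlinarith)) h0'
end
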